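/- arXiv:2106.03745 — 4 statements merged into one kernel-verified Lean document; each statement's English description precedes it below -/
import Mathlib

section
/- Let G be a connected strongly regular graph with parameters (n, k, λ, μ) with λ ∈ {0, 1} and k ≥ 3. Then the Gallai graph Γ(G) is 2-connected. -/
open scoped Classical

namespace GallaiSRG

open SimpleGraph

variable {V : Type*}

/-- Two edges (given as elements of `Sym2 V`) span a triangle in `G`:
they share an endpoint and their other endpoints are adjacent. -/
def SpansTriangle (G : SimpleGraph V) (e f : Sym2 V) : Prop :=
  ∃ u v w : V, e = s(u, v) ∧ f = s(u, w) ∧ G.Adj v w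

lemma SpansTriangle.symm {G : SimpleGraph V} {e f : Sym2 V}
    (h : SpansTriangle G e f) : SpansTriangle G f e := by
  obtain ⟨u, v, w, he, hf, ha⟩ := h
  exact ⟨u, w, v, hf, he, ha.symm⟩

/-- Two edges are incident: they are distinct and share an endpoint. -/
def Incident (e f : Sym2 V) : Prop :=
  e ≠ f ∧ ∃ u : V, u ∈ e ∧ u ∈ f

lemma Incident.symm {e f : Sym2 V} (h : Incident e f) : Incident f e :=
  ⟨h.1.symm, h.2.imp fun _ hu => ⟨hu.2, hu.1⟩⟩

/-- The Gallai graph of `G`: vertices are the edges of `G`, two of them adjacent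
iff the corresponding edges share an endpoint but do not span a triangle of `G`. -/
def gallai (G : SimpleGraph V) : SimpleGraph G.edgeSet where
  Adj e f := Incident (e : Sym2 V) (f : Sym2 V) ∧ ¬SpansTriangle G (e : Sym2 V) (f : Sym2 V)
  symm := ⟨fun e f h => ⟨h.1.symm, fun hs => h.2 hs.symm⟩⟩
  loopless := ⟨fun e h => h.1.1 rfl⟩

/-- The anti-Gallai graph of `G`: vertices are the edges of `G`, two of them adjacent
iff the corresponding edges span a triangle of `G`. -/
def antiGallai (G : SimpleGraph V) : SimpleGraph G.edgeSet where
  Adj e f := (e : Sym2 V) ≠ (f : Sym2 V) ∧ SpansTriangle G (e : Sym2 V) (f : Sym2 V)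
  symm := ⟨fun e f h => ⟨h.1.symm, h.2.symm⟩⟩
  loopless := ⟨fun e h => h.1 rfl⟩

/-- Edge-regularity with parameters `(N, K, L)`, phrased via `Nat.card`/`Set.ncard`
to avoid decidability assumptions: `N` vertices, `K`-regular, adjacent vertices have
exactly `L` common neighbours. -/
def IsEdgeRegularN {W : Type*} (H : SimpleGraph W) (N K L : ℕ) : Prop :=
  Nat.card W = N ∧ (∀ x : W, (H.neighborSet x).ncard = K) ∧
    ∀ x y : W, H.Adj x y → (H.neighborSet x ∩ H.neighborSet y).ncard = L

/-- The diamond graph: `K₄` minus one edge. -/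
def diamond : SimpleGraph (Fin 4) :=
  (completeGraph (Fin 4)).deleteEdges {s(0, 1)}

/-- The fan graph `F_m`: `m` triangles sharing exactly one common (central) vertex. -/
def fanGraph (m : ℕ) : SimpleGraph (Unit ⊕ Fin m × Fin 2) :=
  SimpleGraph.fromRel fun a b =>
    a = Sum.inl () ∨ ∃ i : Fin m, a = Sum.inr (i, 0) ∧ b = Sum.inr (i, 1)

/-- The semi-total point graph `R(H)`: to `H` add, for every edge, a new vertex
adjacent to both endpoints of that edge. -/
def semiTotal (H : SimpleGraph V) : SimpleGraph (V ⊕ H.edgeSet) :=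
  SimpleGraph.fromRel fun a b =>
    (∃ w w' : V, a = Sum.inl w ∧ b = Sum.inl w' ∧ H.Adj w w') ∨
    (∃ (w : V) (e : H.edgeSet), a = Sum.inl w ∧ b = Sum.inr e ∧ w ∈ (e : Sym2 V))

/-- The join `H ∨ K₁` of a graph `H` with one extra vertex (`none`). -/
def joinOne (H : SimpleGraph V) : SimpleGraph (Option V) :=
  SimpleGraph.fromRel fun a b =>
    a = none ∨ ∃ w w' : V, a = some w ∧ b = some w' ∧ H.Adj w w'


set_option linter.unusedSectionVars false

section Aux
variable {G : SimpleGraph V}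

lemma exists_other {e : Sym2 V} (he : e ∈ G.edgeSet) {u : V} (hu : u ∈ e) :
    ∃ a, G.Adj u a ∧ e = s(u, a) := by
  induction e with
  | _ x y =>
    rw [Sym2.mem_iff] at hu
    rw [mem_edgeSet] at he
    rcases hu with rfl | rfl
    · exact ⟨y, he, rfl⟩
    · exact ⟨x, he.symm, Sym2.eq_swap⟩

lemma edge_decomp (e : G.edgeSet) : ∃ p q, G.Adj p q ∧ (e : Sym2 V) = s(p, q) := by
  obtain ⟨x, y⟩ := e
  induction x with
  | _ p q => exact ⟨p, q, ((mem_edgeSet _).mp y), rfl⟩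

lemma spans_adj {u a b : V} (hua : G.Adj u a) (hub : G.Adj u b) (hab : a ≠ b)
    (h : SpansTriangle G s(u, a) s(u, b)) : G.Adj a b := by
  obtain ⟨x, y, z, he, hf, hyz⟩ := h
  rw [Sym2.eq_iff] at he hf
  rcases he with ⟨rfl, rfl⟩ | ⟨rfl, rfl⟩ <;> rcases hf with ⟨h1, rfl⟩ | ⟨rfl, rfl⟩
  · exact hyz
  · exact absurd rfl hub.ne'
  · exact absurd h1.symm hua.ne'
  · exact absurd rfl hab

variable [Fintype V] [DecidableRel G.Adj] {n k l m : ℕ}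

lemma cn_unique (hG : G.IsSRGWith n k l m) (hl : l = 0 ∨ l = 1) {u v : V} (huv : G.Adj u v)
    {w1 w2 : V} (h1 : G.Adj u w1) (h1' : G.Adj v w1) (h2 : G.Adj u w2) (h2' : G.Adj v w2) :
    w1 = w2 := by
  have hc := hG.of_adj u v huv
  have hle : Fintype.card (G.commonNeighbors u v) ≤ 1 := by
    rcases hl with rfl | rfl <;> omega
  have hs := Fintype.card_le_one_iff.mp hle
  have m1 : w1 ∈ G.commonNeighbors u v := (mem_commonNeighbors _).mpr ⟨h1, h1'⟩
  have m2 : w2 ∈ G.commonNeighbors u v := (mem_commonNeighbors _).mpr ⟨h2, h2'⟩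
  exact congrArg Subtype.val (hs ⟨w1, m1⟩ ⟨w2, m2⟩)

lemma cn0 (hG : G.IsSRGWith n k l m) (hl0 : l = 0) {u v w : V} (huv : G.Adj u v)
    (h1 : G.Adj u w) (h2 : G.Adj v w) : False := by
  have hc := hG.of_adj u v huv
  rw [hl0, Fintype.card_eq_zero_iff] at hc
  exact hc.elim ⟨w, (mem_commonNeighbors _).mpr ⟨h1, h2⟩⟩

lemma mu_pos (hG : G.IsSRGWith n k l m) (hconn : G.Connected) (hnc : G ≠ ⊤) : 1 ≤ m := by
  obtain ⟨a, b, hab, hnadj⟩ : ∃ a b : V, a ≠ b ∧ ¬G.Adj a b := by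
    by_contra h
    push_neg at h
    exact hnc (by ext u v; simp only [top_adj]; exact ⟨fun h' => h'.ne, fun h' => h u v h'⟩)
  obtain ⟨p, -, hlen⟩ := hconn.exists_path_of_dist a b
  cases p with
  | nil => exact absurd rfl hab
  | cons h1 q =>
    rename_i c
    cases q with
    | nil => exact absurd h1 hnadj
    | cons h2 r =>
      rename_i d
      simp only [Walk.length_cons] at hlen
      have hnadj_ad : ¬G.Adj a d := by
        intro had
        have := SimpleGraph.dist_le (Walk.cons had r)
        simp only [Walk.length_cons] at this
        omega
      have hne_ad : a ≠ d := by
        rintro rfl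
        have := SimpleGraph.dist_le r
        omega
      have hmem : c ∈ G.commonNeighbors a d := (mem_commonNeighbors _).mpr ⟨h1, h2.symm⟩
      have hpos : 0 < Fintype.card (G.commonNeighbors a d) :=
        Fintype.card_pos_iff.mpr ⟨⟨c, hmem⟩⟩
      rw [hG.of_not_adj hne_ad hnadj_ad] at hpos
      omega

lemma k_four (hG : G.IsSRGWith n k l m) (hl1 : l = 1) (hk : 3 ≤ k)
    {u v : V} (huv : G.Adj u v) : 4 ≤ k := by
  by_contra hk4
  have hk3 : k = 3 := by omega
  obtain ⟨w, hw⟩ := Fintype.card_eq_one_iff.mp (hl1 ▸ hG.of_adj u v huv)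
  obtain ⟨huw, hvw⟩ := (mem_commonNeighbors _).mp w.2
  set w0 : V := (w : V) with hw0
  have hdeg : (G.neighborFinset u).card = k := hG.regular u
  have hsub : ({v, w0} : Finset V) ⊆ G.neighborFinset u := by
    intro t ht
    simp only [Finset.mem_insert, Finset.mem_singleton] at ht
    rcases ht with rfl | rfl
    · exact (mem_neighborFinset _ _ _).mpr huv
    · exact (mem_neighborFinset _ _ _).mpr huw
  have hvw0 : v ≠ w0 := fun h => G.loopless.irrefl w0 (h ▸ hvw)
  have hcard2 : ({v, w0} : Finset V).card ≤ 2 := (Finset.card_insert_le _ _).trans (by simp)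
  have hpos : 0 < (G.neighborFinset u \ {v, w0}).card := by
    rw [Finset.card_sdiff_of_subset hsub]; omega
  obtain ⟨z, hz⟩ := Finset.card_pos.mp hpos
  rw [Finset.mem_sdiff] at hz
  obtain ⟨hzN, hz'⟩ := hz
  simp only [Finset.mem_insert, Finset.mem_singleton, not_or] at hz'
  obtain ⟨hzv, hzw⟩ := hz'
  have huz : G.Adj u z := (mem_neighborFinset _ _ _).mp hzN
  -- N(u) = {v, w0, z}
  have hNu : G.neighborFinset u = ({v, w0, z} : Finset V) := by
    refine (Finset.eq_of_subset_of_card_le ?_ ?_).symm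
    · intro t ht
      simp only [Finset.mem_insert, Finset.mem_singleton] at ht
      rcases ht with rfl | rfl | rfl
      · exact (mem_neighborFinset _ _ _).mpr huv
      · exact (mem_neighborFinset _ _ _).mpr huw
      · exact (mem_neighborFinset _ _ _).mpr huz
    · have hc3 : ({v, w0, z} : Finset V).card = 3 := by
        rw [Finset.card_insert_of_notMem (by
          simp only [Finset.mem_insert, Finset.mem_singleton]
          push_neg
          exact ⟨hvw0, fun h => hzv h.symm⟩),
          Finset.card_insert_of_notMem (by
          simp only [Finset.mem_singleton]
          exact fun h => hzw h.symm), Finset.card_singleton]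
      rw [hdeg, hk3, hc3]
  obtain ⟨t, ht⟩ := Fintype.card_eq_one_iff.mp (hl1 ▸ hG.of_adj u z huz)
  obtain ⟨hut, hzt⟩ := (mem_commonNeighbors _).mp t.2
  have htN : (t : V) ∈ G.neighborFinset u := (mem_neighborFinset _ _ _).mpr hut
  rw [hNu] at htN
  simp only [Finset.mem_insert, Finset.mem_singleton] at htN
  rcases htN with htv | htw | htz
  · -- t = v : z and w0 are common neighbors of u,v
    have : z = w0 := cn_unique hG (Or.inr hl1) huv huz (htv ▸ hzt.symm) huw hvw
    exact hzw this
  · -- t = w0 : z and v common neighbors of u, w0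
    have : z = v := cn_unique hG (Or.inr hl1) huw huz (htw ▸ hzt.symm) huv hvw.symm
    exact hzv this
  · exact G.loopless.irrefl z (by rw [htz] at hzt; exact hzt)

lemma sym2_ne_left {a b p q : V} (h1 : a ≠ p) (h2 : a ≠ q) : s(a, b) ≠ s(p, q) := by
  intro h
  rw [Sym2.eq_iff] at h
  rcases h with ⟨h, -⟩ | ⟨h, -⟩
  exacts [h1 h, h2 h]

lemma sym2_ne_right {a b p q : V} (h1 : b ≠ p) (h2 : b ≠ q) : s(a, b) ≠ s(p, q) := by
  intro h
  rw [Sym2.eq_iff] at h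
  rcases h with ⟨-, h⟩ | ⟨-, h⟩
  exacts [h2 h, h1 h]

lemma induce_adj_of {W : Type*} {H : SimpleGraph W} {s : Set W} {a b : s} (h : H.Adj a b) :
    (H.induce s).Adj a b := by
  simp only [comap_adj, Function.Embedding.coe_subtype]
  exact h

lemma gallai_adj_of {e f : G.edgeSet} {u a b : V}
    (he : (e : Sym2 V) = s(u, a)) (hf : (f : Sym2 V) = s(u, b))
    (hua : G.Adj u a) (hub : G.Adj u b) (hab : a ≠ b) (hnadj : ¬G.Adj a b) :
    (gallai G).Adj e f := by
  show Incident (e : Sym2 V) (f : Sym2 V) ∧ ¬SpansTriangle G (e : Sym2 V) (f : Sym2 V)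
  refine ⟨⟨?_, u, ?_, ?_⟩, ?_⟩
  · rw [he, hf]
    intro h
    rw [Sym2.eq_iff] at h
    rcases h with ⟨-, h⟩ | ⟨h, -⟩
    · exact hab h
    · exact hub.ne' h.symm
  · rw [he]; exact Sym2.mem_mk_left u a
  · rw [hf]; exact Sym2.mem_mk_left u b
  · rw [he, hf]; exact fun hs => hnadj (spans_adj hua hub hab hs)

lemma reach_star (hG : G.IsSRGWith n k l m) (hl : l = 0 ∨ l = 1) (hk : 3 ≤ k)
    {x e f : G.edgeSet} (he : e ∈ ({x}ᶜ : Set G.edgeSet)) (hf : f ∈ ({x}ᶜ : Set G.edgeSet))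
    {u : V} (hue : u ∈ (e : Sym2 V)) (huf : u ∈ (f : Sym2 V)) :
    ((gallai G).induce ({x}ᶜ : Set G.edgeSet)).Reachable ⟨e, he⟩ ⟨f, hf⟩ := by
  obtain ⟨a, hua, hea⟩ := exists_other e.2 hue
  obtain ⟨b, hub, hfb⟩ := exists_other f.2 huf
  by_cases hef : e = f
  · subst hef
    rfl
  have hab : a ≠ b := by
    rintro rfl
    exact hef (Subtype.ext (hea.trans hfb.symm))
  by_cases hadj : G.Adj a b
  · -- triangle case: l = 1, go around via a third edge at u
    have hl1 : l = 1 := by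
      rcases hl with hl0 | hl1
      · exact (cn0 hG hl0 hua hub hadj).elim
      · exact hl1
    have hk4 : 4 ≤ k := k_four hG hl1 hk hua
    set bad : V := if h : ∃ c0, (x : Sym2 V) = s(u, c0) then h.choose else a with hbad
    have hTpos : 0 < (G.neighborFinset u \ {a, b, bad}).card := by
      have h1 := Finset.le_card_sdiff ({a, b, bad} : Finset V) (G.neighborFinset u)
      have h2 : ({a, b, bad} : Finset V).card ≤ 3 := by
        refine (Finset.card_insert_le _ _).trans ?_
        have h3 := Finset.card_insert_le b ({bad} : Finset V)
        have h4 : ({bad} : Finset V).card = 1 := Finset.card_singleton bad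
        omega
      have h3 : (G.neighborFinset u).card = k := hG.regular u
      omega
    obtain ⟨c, hc⟩ := Finset.card_pos.mp hTpos
    rw [Finset.mem_sdiff] at hc
    obtain ⟨hcN, hc'⟩ := hc
    simp only [Finset.mem_insert, Finset.mem_singleton, not_or] at hc'
    obtain ⟨hca, hcb, hcbad⟩ := hc'
    have huc : G.Adj u c := (mem_neighborFinset _ _ _).mp hcN
    set g : G.edgeSet := ⟨s(u, c), (mem_edgeSet _).mpr huc⟩ with hg
    have hgmem : g ∈ ({x}ᶜ : Set G.edgeSet) := by
      simp only [Set.mem_compl_iff, Set.mem_singleton_iff]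
      intro hgx
      have hxval : (x : Sym2 V) = s(u, c) := by rw [← hgx]
      have hex : ∃ c0, (x : Sym2 V) = s(u, c0) := ⟨c, hxval⟩
      have hbadc : bad = hex.choose := by rw [hbad, dif_pos hex]
      have hspec : s(u, c) = s(u, hex.choose) := hxval.symm.trans hex.choose_spec
      rw [Sym2.eq_iff] at hspec
      rcases hspec with ⟨-, h⟩ | ⟨-, h⟩
      · exact hcbad (by rw [hbadc, ← h])
      · exact huc.ne' h
    have hnac : ¬G.Adj a c := fun h => hcb (cn_unique hG hl hua hub hadj huc h).symm
    have hnbc : ¬G.Adj b c := fun h => hca (cn_unique hG hl hub hua hadj.symm huc h).symm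
    have h1 : (gallai G).Adj e g := gallai_adj_of hea rfl hua huc (fun h => hca h.symm) hnac
    have h2 : (gallai G).Adj g f :=
      gallai_adj_of rfl hfb huc hub (fun h => hcb h) fun h => hnbc h.symm
    exact (Adj.reachable (induce_adj_of (a := ⟨e, he⟩) (b := ⟨g, hgmem⟩) h1)).trans
      (Adj.reachable (induce_adj_of (a := ⟨g, hgmem⟩) (b := ⟨f, hf⟩) h2))
  · exact Adj.reachable (induce_adj_of (a := ⟨e, he⟩) (b := ⟨f, hf⟩)
      (gallai_adj_of hea hfb hua hub hab hadj))

lemma reach_walk (hG : G.IsSRGWith n k l m) (hl : l = 0 ∨ l = 1) (hk : 3 ≤ k)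
    {x : G.edgeSet} {a c : V} (w : (G.deleteEdges {(x : Sym2 V)}).Walk a c) :
    ∀ (e f : G.edgeSet) (he : e ∈ ({x}ᶜ : Set G.edgeSet)) (hf : f ∈ ({x}ᶜ : Set G.edgeSet)),
      a ∈ (e : Sym2 V) → c ∈ (f : Sym2 V) →
      ((gallai G).induce ({x}ᶜ : Set G.edgeSet)).Reachable ⟨e, he⟩ ⟨f, hf⟩ := by
  induction w with
  | nil =>
    intro e f he hf hae hcf
    exact reach_star hG hl hk he hf hae hcf
  | @cons u1 u2 u3 h p ih =>
    intro e f he hf hae hcf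
    rw [deleteEdges_adj] at h
    obtain ⟨hadj, hnx⟩ := h
    set g : G.edgeSet := ⟨s(u1, u2), (mem_edgeSet _).mpr hadj⟩ with hg
    have hgmem : g ∈ ({x}ᶜ : Set G.edgeSet) := by
      simp only [Set.mem_compl_iff, Set.mem_singleton_iff]
      intro hgx
      exact hnx (by rw [Set.mem_singleton_iff, ← hgx])
    exact (reach_star hG hl hk he hgmem hae (Sym2.mem_mk_left u1 u2)).trans
      (ih g f hgmem hf (Sym2.mem_mk_right u1 u2) hcf)

lemma detour (hG : G.IsSRGWith n k l m) (hconn : G.Connected) (hnc : G ≠ ⊤)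
    (hl : l = 0 ∨ l = 1) (hk : 3 ≤ k) (x : G.edgeSet) :
    (G.deleteEdges {(x : Sym2 V)}).Preconnected := by
  obtain ⟨p, q, hpq, hxval⟩ := edge_decomp x
  set G' := G.deleteEdges {(x : Sym2 V)} with hG'
  have hstep : ∀ {a b : V}, G.Adj a b → s(a, b) ≠ s(p, q) → G'.Adj a b := by
    intro a b hab hne'
    rw [hG', deleteEdges_adj]
    refine ⟨hab, ?_⟩
    simp only [Set.mem_singleton_iff, hxval]
    exact hne'
  have hpq' : G'.Reachable p q := by
    rcases hl with hl0 | hl1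
    · have hm := mu_pos hG hconn hnc
      have hv0 : 0 < (G.neighborFinset p \ {q}).card := by
        have h1 := Finset.le_card_sdiff ({q} : Finset V) (G.neighborFinset p)
        have h2 : (G.neighborFinset p).card = k := hG.regular p
        simp only [Finset.card_singleton] at h1
        omega
      obtain ⟨v, hv⟩ := Finset.card_pos.mp hv0
      rw [Finset.mem_sdiff, Finset.mem_singleton] at hv
      obtain ⟨hvN, hvq⟩ := hv
      have hpv : G.Adj p v := (mem_neighborFinset _ _ _).mp hvN
      have hnvq : ¬G.Adj v q := fun h => cn0 hG hl0 hpq hpv h.symm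
      have hw0 : 0 < (G.neighborFinset v \ {p, q}).card := by
        have h1 := Finset.le_card_sdiff ({p, q} : Finset V) (G.neighborFinset v)
        have h2 : (G.neighborFinset v).card = k := hG.regular v
        have h3 : ({p, q} : Finset V).card ≤ 2 :=
          (Finset.card_insert_le _ _).trans (by simp)
        omega
      obtain ⟨w2, hw2⟩ := Finset.card_pos.mp hw0
      rw [Finset.mem_sdiff] at hw2
      obtain ⟨hw2N, hw2'⟩ := hw2
      simp only [Finset.mem_insert, Finset.mem_singleton, not_or] at hw2'
      obtain ⟨hw2p, hw2q⟩ := hw2'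
      have hvw2 : G.Adj v w2 := (mem_neighborFinset _ _ _).mp hw2N
      have hnpw2 : ¬G.Adj p w2 := fun h => cn0 hG hl0 hpv h hvw2
      have s1 : G'.Adj p v := hstep hpv (sym2_ne_right hpv.ne' hvq)
      have s2 : G'.Adj v w2 := hstep hvw2 (sym2_ne_left hpv.ne' hvq)
      by_cases hqw2 : G.Adj q w2
      · have s3 : G'.Adj w2 q := hstep hqw2.symm (sym2_ne_left hw2p hw2q)
        exact s1.reachable.trans (s2.reachable.trans s3.reachable)
      · have hmz : 0 < Fintype.card (G.commonNeighbors w2 q) := by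
          rw [hG.of_not_adj hw2q (fun h => hqw2 h.symm)]
          omega
        obtain ⟨z0⟩ := Fintype.card_pos_iff.mp hmz
        obtain ⟨hw2z, hqz⟩ := (mem_commonNeighbors _).mp z0.2
        have hzp : (z0 : V) ≠ p := fun h => hnpw2 (by rw [h] at hw2z; exact hw2z.symm)
        have s3 : G'.Adj w2 (z0 : V) := hstep hw2z (sym2_ne_left hw2p hw2q)
        have s4 : G'.Adj (z0 : V) q := hstep hqz.symm (sym2_ne_left hzp hqz.ne')
        exact s1.reachable.trans (s2.reachable.trans (s3.reachable.trans s4.reachable))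
    · have hc1 : Fintype.card (G.commonNeighbors p q) = 1 := hl1 ▸ hG.of_adj p q hpq
      obtain ⟨w0⟩ := Fintype.card_pos_iff.mp
        (show 0 < Fintype.card (G.commonNeighbors p q) by omega)
      obtain ⟨hpw, hqw⟩ := (mem_commonNeighbors _).mp w0.2
      have s1 : G'.Adj p (w0 : V) := hstep hpw (sym2_ne_right hpw.ne' hqw.ne')
      have s2 : G'.Adj (w0 : V) q := hstep hqw.symm (sym2_ne_left hpw.ne' hqw.ne')
      exact s1.reachable.trans s2.reachable
  intro a b
  obtain ⟨wab⟩ := hconn.preconnected a b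
  induction wab with
  | nil => exact Reachable.refl _
  | @cons u1 u2 u3 h pw ih =>
    by_cases hcase : s(u1, u2) = s(p, q)
    · rw [Sym2.eq_iff] at hcase
      rcases hcase with ⟨rfl, rfl⟩ | ⟨rfl, rfl⟩
      · exact hpq'.trans ih
      · exact hpq'.symm.trans ih
    · exact ((hstep h hcase).reachable).trans ih

theorem gallai_two_connected' (hG : G.IsSRGWith n k l m) (hconn : G.Connected)
    (hnc : G ≠ ⊤) (hne : G ≠ ⊥) (hl : l = 0 ∨ l = 1) (hk : 3 ≤ k) :
    3 ≤ Nat.card G.edgeSet ∧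
      ∀ x : G.edgeSet, ((gallai G).induce ({x}ᶜ : Set G.edgeSet)).Connected := by
  classical
  obtain ⟨u0, v0, huv0⟩ : ∃ u v : V, G.Adj u v := by
    by_contra h
    push_neg at h
    exact hne (by ext u v; simp only [bot_adj, iff_false]; exact h u v)
  have card3 : 3 ≤ Nat.card G.edgeSet := by
    have hinj : Function.Injective
        (fun v : G.neighborSet u0 => (⟨s(u0, (v : V)), (mem_edgeSet _).mpr v.2⟩ : G.edgeSet)) := by
      rintro ⟨v1, hv1⟩ ⟨v2, hv2⟩ h
      have h' : s(u0, v1) = s(u0, v2) := congrArg Subtype.val h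
      rw [Sym2.eq_iff] at h'
      rcases h' with ⟨-, h'⟩ | ⟨h1, h2⟩
      · exact Subtype.ext h'
      · exact Subtype.ext (h2.trans h1)
    have h1 : Nat.card (G.neighborSet u0) = k := by
      rw [Nat.card_eq_fintype_card, card_neighborSet_eq_degree]
      exact hG.regular u0
    calc (3 : ℕ) ≤ k := hk
      _ = Nat.card (G.neighborSet u0) := h1.symm
      _ ≤ Nat.card G.edgeSet := Nat.card_le_card_of_injective _ hinj
  refine ⟨card3, fun x => ?_⟩
  rw [connected_iff]
  constructor
  · rintro ⟨e, he⟩ ⟨f, hf⟩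
    obtain ⟨a, b, hab, hea⟩ := edge_decomp e
    obtain ⟨c, d, hcd, hfc⟩ := edge_decomp f
    obtain ⟨w⟩ := detour hG hconn hnc hl hk x a c
    exact reach_walk hG hl hk w e f he hf
      (by rw [hea]; exact Sym2.mem_mk_left a b)
      (by rw [hfc]; exact Sym2.mem_mk_left c d)
  · have hnt : Nontrivial G.edgeSet := Finite.one_lt_card_iff_nontrivial.mp (by omega)
    obtain ⟨e, hex⟩ := exists_ne x
    exact ⟨⟨e, by simpa using hex⟩⟩

end Aux

/-- For a connected SRG with `λ ∈ {0, 1}` and `k ≥ 3`, the Gallai graph is 2-connected: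
it has at least 3 vertices and deleting any vertex leaves it connected. -/
theorem gallai_two_connected {V : Type*} [Fintype V] (G : SimpleGraph V)
    [DecidableRel G.Adj] {n k l m : ℕ} (hG : G.IsSRGWith n k l m) (hconn : G.Connected)
    (hnc : G ≠ ⊤) (hne : G ≠ ⊥) (hl : l = 0 ∨ l = 1) (hk : 3 ≤ k) :
    3 ≤ Nat.card G.edgeSet ∧
      ∀ x : G.edgeSet, ((gallai G).induce ({x}ᶜ : Set G.edgeSet)).Connected :=
  gallai_two_connected' hG hconn hnc hne hl hk

end GallaiSRG
end

section
/- Let G be a connected strongly regular graph with parameters (n, k, 2, μ) in which the closed neighbourhood of each vertex induces a wheel (i.e., the neighbourhood of each vertex induces a single cycle). Then the anti-Gallai graph Δ(G) is connected and edge-regular with parameters (nk/2, 4, 1). -/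
open scoped Classical

namespace GallaiSRG

open SimpleGraph

variable {V : Type*}

-- generic closure lemma
lemma walk_closed {W : Type*} {H : SimpleGraph W} {S : Set W}
    (hS : ∀ a b, H.Adj a b → a ∈ S → b ∈ S) {a b : W}
    (h : H.Reachable a b) (ha : a ∈ S) : b ∈ S := by
  obtain ⟨p⟩ := h
  induction p with
  | nil => exact ha
  | cons h q ih => exact ih (hS _ _ h ha)

lemma pair_mem {α : Type*} {a b w x z : α} (hw : w = a ∨ w = b) (hx : x = a ∨ x = b)
    (hwx : w ≠ x) (hz : z = a ∨ z = b) : z = w ∨ z = x := by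
  rcases hw with rfl|rfl <;> rcases hx with rfl|rfl <;> tauto

variable {G : SimpleGraph V} [Fintype V] [DecidableRel G.Adj] {n k m : ℕ}

lemma cn_two (hG : G.IsSRGWith n k 2 m) {u v : V} (h : G.Adj u v) :
    ∃ w x, w ≠ x ∧ G.commonNeighbors u v = {w, x} := by
  have h2 : (G.commonNeighbors u v).ncard = 2 := by
    rw [← Nat.card_coe_set_eq, Nat.card_eq_fintype_card]
    exact hG.of_adj u v h
  exact Set.ncard_eq_two.mp h2

lemma nbhd_preconnected
    (hwheel : ∀ v : V, Nonempty (G.induce (G.neighborSet v) ≃g cycleGraph k)) (v : V) :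
    (G.induce (G.neighborSet v)).Preconnected := by
  obtain ⟨iso⟩ := hwheel v
  intro x y
  have := (cycleGraph_preconnected (iso x) (iso y)).map iso.symm.toHom
  simpa using this

-- if v,w,x form a triangle inside N(u), then N(u) ⊆ {v,w,x}
lemma triangle_nbhd (hG : G.IsSRGWith n k 2 m)
    (hwheel : ∀ v : V, Nonempty (G.induce (G.neighborSet v) ≃g cycleGraph k))
    {u v w x : V} (huv : G.Adj u v) (huw : G.Adj u w) (hux : G.Adj u x)
    (hvw : G.Adj v w) (hvx : G.Adj v x) (hwx : G.Adj w x) :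
    G.neighborSet u ⊆ {v, w, x} := by
  -- key: for adjacent pair (p,q) both adjacent to u, the common nbhd of p,q within things...
  have key : ∀ p q r : V, G.Adj u p → G.Adj u q → G.Adj u r → G.Adj p q → G.Adj p r →
      q ≠ r → ∀ z, G.Adj u z → G.Adj p z → z = q ∨ z = r := by
    intro p q r hup huq hur hpq hpr hqr z huz hpz
    obtain ⟨a, b, hab, hCN⟩ := cn_two hG (hup)
    have hq : q ∈ G.commonNeighbors u p := (G.mem_commonNeighbors).mpr ⟨huq, hpq⟩
    have hr : r ∈ G.commonNeighbors u p := (G.mem_commonNeighbors).mpr ⟨hur, hpr⟩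
    have hz : z ∈ G.commonNeighbors u p := (G.mem_commonNeighbors).mpr ⟨huz, hpz⟩
    rw [hCN] at hq hr hz
    exact pair_mem hq hr hqr hz
  have hclosed : ∀ a b : ↥(G.neighborSet u), (G.induce (G.neighborSet u)).Adj a b →
      (a : V) ∈ ({v, w, x} : Set V) → (b : V) ∈ ({v, w, x} : Set V) := by
    rintro ⟨a, ha⟩ ⟨b, hb⟩ hab hmem
    have hab' : G.Adj a b := hab
    rcases hmem with h1 | h1 | h1
    · rcases key v w x huv huw hux hvw hvx hwx.ne b hb (h1 ▸ hab') with rfl | rfl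
      · exact Or.inr (Or.inl rfl)
      · exact Or.inr (Or.inr rfl)
    · rcases key w v x huw huv hux hvw.symm hwx hvx.ne b hb (h1 ▸ hab') with rfl | rfl
      · exact Or.inl rfl
      · exact Or.inr (Or.inr rfl)
    · rw [Set.mem_singleton_iff] at h1
      rcases key x v w hux huv huw hvx.symm hwx.symm hvw.ne b hb (h1 ▸ hab') with rfl | rfl
      · exact Or.inl rfl
      · exact Or.inr (Or.inl rfl)
  intro y hy
  have hreach := nbhd_preconnected hwheel u ⟨v, huv⟩ ⟨y, hy⟩
  exact walk_closed (S := {z : ↥(G.neighborSet u) | (z : V) ∈ ({v, w, x} : Set V)})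
    hclosed hreach (Or.inl rfl)


lemma noK4 (hG : G.IsSRGWith n k 2 m)
    (hwheel : ∀ v : V, Nonempty (G.induce (G.neighborSet v) ≃g cycleGraph k))
    (hconn : G.Connected) (hnc : G ≠ ⊤)
    {u v w x : V} (huv : G.Adj u v) (huw : G.Adj u w) (hux : G.Adj u x)
    (hvw : G.Adj v w) (hvx : G.Adj v x) (hwx : G.Adj w x) : False := by
  have hNu := triangle_nbhd hG hwheel huv huw hux hvw hvx hwx
  have hNv := triangle_nbhd hG hwheel huv.symm hvw hvx huw hux hwx
  have hNw := triangle_nbhd hG hwheel huw.symm hvw.symm hwx huv hux hvx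
  have hNx := triangle_nbhd hG hwheel hux.symm hvx.symm hwx.symm huv huw hvw
  have hclosed : ∀ a b : V, G.Adj a b → a ∈ ({u, v, w, x} : Set V) →
      b ∈ ({u, v, w, x} : Set V) := by
    rintro a b hab (h|h|h|h)
    · have h2 := hNu (h ▸ hab : G.Adj u b)
      simp only [Set.mem_insert_iff, Set.mem_singleton_iff] at h2 ⊢; tauto
    · have h2 := hNv (h ▸ hab : G.Adj v b)
      simp only [Set.mem_insert_iff, Set.mem_singleton_iff] at h2 ⊢; tauto
    · have h2 := hNw (h ▸ hab : G.Adj w b)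
      simp only [Set.mem_insert_iff, Set.mem_singleton_iff] at h2 ⊢; tauto
    · rw [Set.mem_singleton_iff] at h
      have h2 := hNx (h ▸ hab : G.Adj x b)
      simp only [Set.mem_insert_iff, Set.mem_singleton_iff] at h2 ⊢; tauto
  have hall : ∀ y : V, y = u ∨ y = v ∨ y = w ∨ y = x := by
    intro y
    have h2 := walk_closed hclosed (hconn.preconnected u y) (Or.inl rfl)
    simpa using h2
  apply hnc
  apply le_antisymm le_top
  intro a b hab
  rw [top_adj] at hab
  rcases hall a with rfl|rfl|rfl|rfl <;> rcases hall b with rfl|rfl|rfl|rfl <;>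
    first
      | exact absurd rfl hab
      | assumption
      | exact huv.symm | exact huw.symm | exact hux.symm
      | exact hvw.symm | exact hvx.symm | exact hwx.symm


lemma adj_iff {u v : V} (hmem : s(u,v) ∈ G.edgeSet) (f : G.edgeSet) :
    (antiGallai G).Adj ⟨s(u,v), hmem⟩ f ↔
      ∃ c ∈ G.commonNeighbors u v, (f : Sym2 V) = s(u,c) ∨ (f : Sym2 V) = s(v,c) := by
  have huv : G.Adj u v := G.mem_edgeSet.mp hmem
  constructor
  · rintro ⟨hne, a, b, c, he, hf, hbc⟩
    rw [Sym2.eq_iff] at he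
    rcases he with ⟨rfl, rfl⟩ | ⟨rfl, rfl⟩
    · have huc : G.Adj u c := G.mem_edgeSet.mp (hf ▸ f.prop)
      exact ⟨c, (G.mem_commonNeighbors).mpr ⟨huc, hbc⟩, Or.inl hf⟩
    · have hvc : G.Adj v c := G.mem_edgeSet.mp (hf ▸ f.prop)
      exact ⟨c, (G.mem_commonNeighbors).mpr ⟨hbc, hvc⟩, Or.inr hf⟩
  · rintro ⟨c, hc, hf | hf⟩ <;> rw [G.mem_commonNeighbors] at hc
    · refine ⟨?_, u, v, c, rfl, hf, hc.2⟩
      intro hEq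
      have hEq2 : s(u,v) = s(u,c) := hEq.trans hf
      rcases Sym2.eq_iff.mp hEq2 with ⟨-, h'⟩ | ⟨h', -⟩
      · exact hc.2.ne h'
      · exact hc.1.ne h'
    · refine ⟨?_, v, u, c, Sym2.eq_swap, hf, hc.1⟩
      intro hEq
      have hEq2 : s(u,v) = s(v,c) := hEq.trans hf
      rcases Sym2.eq_iff.mp hEq2 with ⟨h', -⟩ | ⟨h', -⟩
      · exact huv.ne h'
      · exact hc.1.ne h'

lemma neighborSet_eq (hG : G.IsSRGWith n k 2 m) {u v w x : V}
    (hmem : s(u,v) ∈ G.edgeSet) (hwx : w ≠ x) (hCN : G.commonNeighbors u v = {w, x})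
    (huw : G.Adj u w) (hux : G.Adj u x) (hvw : G.Adj v w) (hvx : G.Adj v x) :
    (antiGallai G).neighborSet ⟨s(u,v), hmem⟩ =
      {⟨s(u,w), G.mem_edgeSet.mpr huw⟩, ⟨s(u,x), G.mem_edgeSet.mpr hux⟩,
       ⟨s(v,w), G.mem_edgeSet.mpr hvw⟩, ⟨s(v,x), G.mem_edgeSet.mpr hvx⟩} := by
  ext g
  rw [mem_neighborSet, adj_iff hmem g]
  simp only [hCN, Set.mem_insert_iff, Set.mem_singleton_iff, Subtype.ext_iff]
  constructor
  · rintro ⟨c, (rfl|rfl), (h|h)⟩ <;> tauto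
  · rintro (h|h|h|h)
    · exact ⟨w, Or.inl rfl, Or.inl h⟩
    · exact ⟨x, Or.inr rfl, Or.inl h⟩
    · exact ⟨w, Or.inl rfl, Or.inr h⟩
    · exact ⟨x, Or.inr rfl, Or.inr h⟩

lemma deg_four (hG : G.IsSRGWith n k 2 m) (e : G.edgeSet) :
    ((antiGallai G).neighborSet e).ncard = 4 := by
  obtain ⟨ev, he⟩ := e
  revert he
  induction ev using Sym2.ind with
  | _ u v =>
  intro he
  have huv : G.Adj u v := G.mem_edgeSet.mp he
  obtain ⟨w, x, hwx, hCN⟩ := cn_two hG huv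
  have hw : w ∈ G.commonNeighbors u v := by rw [hCN]; exact Or.inl rfl
  have hx : x ∈ G.commonNeighbors u v := by rw [hCN]; exact Or.inr rfl
  rw [G.mem_commonNeighbors] at hw hx
  rw [neighborSet_eq hG he hwx hCN hw.1 hx.1 hw.2 hx.2]
  have n1 : u ≠ v := huv.ne
  have n2 : u ≠ w := hw.1.ne
  have n3 : u ≠ x := hx.1.ne
  have n4 : v ≠ w := hw.2.ne
  have n5 : v ≠ x := hx.2.ne
  rw [Set.ncard_insert_of_notMem ?h1 (Set.toFinite _),
      Set.ncard_insert_of_notMem ?h2 (Set.toFinite _),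
      Set.ncard_insert_of_notMem ?h3 (Set.toFinite _), Set.ncard_singleton]
  case h1 =>
    simp [Subtype.mk.injEq, Sym2.eq_iff, n1, n2, n3, n4, n5, hwx,
      n1.symm, n2.symm, n3.symm, n4.symm, n5.symm, hwx.symm]
  case h2 =>
    simp [Subtype.mk.injEq, Sym2.eq_iff, n1, n2, n3, n4, n5, hwx,
      n1.symm, n2.symm, n3.symm, n4.symm, n5.symm, hwx.symm]
  case h3 =>
    simp [Subtype.mk.injEq, Sym2.eq_iff, n1, n2, n3, n4, n5, hwx,
      n1.symm, n2.symm, n3.symm, n4.symm, n5.symm, hwx.symm]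

lemma inter_eq (hG : G.IsSRGWith n k 2 m)
    (hwheel : ∀ v : V, Nonempty (G.induce (G.neighborSet v) ≃g cycleGraph k))
    (hconn : G.Connected) (hnc : G ≠ ⊤)
    {p q r : V} (hpq : G.Adj p q) (hpr : G.Adj p r) (hqr : G.Adj q r)
    (h1 : s(p,q) ∈ G.edgeSet) (h2 : s(p,r) ∈ G.edgeSet) :
    (antiGallai G).neighborSet ⟨s(p,q), h1⟩ ∩ (antiGallai G).neighborSet ⟨s(p,r), h2⟩ =
      {⟨s(q,r), G.mem_edgeSet.mpr hqr⟩} := by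
  ext g
  simp only [Set.mem_inter_iff, mem_neighborSet, adj_iff h1 g, adj_iff h2 g,
    Set.mem_singleton_iff, Subtype.ext_iff]
  constructor
  · rintro ⟨⟨c, hc, hf1|hf1⟩, ⟨d, hd, hf2|hf2⟩⟩ <;>
      rw [G.mem_commonNeighbors] at hc hd <;> rw [hf1, Sym2.eq_iff] at hf2
    · rcases hf2 with ⟨-, rfl⟩ | ⟨rfl, rfl⟩
      · exact (noK4 hG hwheel hconn hnc hpq hpr hc.1 hqr hc.2 hd.2).elim
      · exact (hc.1.ne rfl).elim
    · rcases hf2 with ⟨rfl, -⟩ | ⟨rfl, rfl⟩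
      · exact (hpr.ne rfl).elim
      · exact (hd.1.ne rfl).elim
    · rcases hf2 with ⟨rfl, -⟩ | ⟨rfl, rfl⟩
      · exact (hpq.ne rfl).elim
      · exact (hc.1.ne rfl).elim
    · rcases hf2 with ⟨rfl, -⟩ | ⟨rfl, rfl⟩
      · exact (hqr.ne rfl).elim
      · exact hf1
  · rintro h
    refine ⟨⟨r, (G.mem_commonNeighbors).mpr ⟨hpr, hqr⟩, Or.inr h⟩,
      ⟨q, (G.mem_commonNeighbors).mpr ⟨hpq, hqr.symm⟩, Or.inr (h.trans Sym2.eq_swap)⟩⟩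


lemma star_reach
    (hwheel : ∀ v : V, Nonempty (G.induce (G.neighborSet v) ≃g cycleGraph k))
    {v a b : V} (ha : G.Adj v a) (hb : G.Adj v b) :
    (antiGallai G).Reachable ⟨s(v,a), G.mem_edgeSet.mpr ha⟩ ⟨s(v,b), G.mem_edgeSet.mpr hb⟩ := by
  let F : G.induce (G.neighborSet v) →g antiGallai G :=
    { toFun := fun p => ⟨s(v, p.1), G.mem_edgeSet.mpr p.2⟩,
      map_rel' := by
        rintro ⟨x, hx⟩ ⟨y, hy⟩ hxy
        have hxy' : G.Adj x y := hxy
        refine ⟨?_, v, x, y, rfl, rfl, hxy'⟩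
        intro hEq
        rcases Sym2.eq_iff.mp hEq with ⟨-, h'⟩ | ⟨h', -⟩
        · exact hxy'.ne h'
        · exact (hy : G.Adj v y).ne h' }
  have := (nbhd_preconnected hwheel v ⟨a, ha⟩ ⟨b, hb⟩).map F
  exact this

lemma reach_main
    (hwheel : ∀ v : V, Nonempty (G.induce (G.neighborSet v) ≃g cycleGraph k)) :
    ∀ {x a : V} (_ : G.Walk x a) {y b : V} (hxy : G.Adj x y) (hab : G.Adj a b),
    (antiGallai G).Reachable ⟨s(x,y), G.mem_edgeSet.mpr hxy⟩ ⟨s(a,b), G.mem_edgeSet.mpr hab⟩ := by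
  intro x a p
  induction p with
  | nil => exact fun hxy hab => star_reach hwheel hxy hab
  | @cons x c a h q ih =>
    intro y b hxy hab
    have r1 := star_reach hwheel hxy h
    have r2 := ih h.symm hab
    have hflip : (⟨s(x,c), G.mem_edgeSet.mpr h⟩ : G.edgeSet) =
        ⟨s(c,x), G.mem_edgeSet.mpr h.symm⟩ := Subtype.ext Sym2.eq_swap
    exact r1.trans (hflip ▸ r2)

lemma antiGallai_preconnected
    (hwheel : ∀ v : V, Nonempty (G.induce (G.neighborSet v) ≃g cycleGraph k))
    (hconn : G.Connected) : (antiGallai G).Preconnected := by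
  intro e f
  obtain ⟨ev, he⟩ := e
  obtain ⟨fv, hf⟩ := f
  revert he hf
  induction ev using Sym2.ind with
  | _ x y =>
  induction fv using Sym2.ind with
  | _ a b =>
  intro he hf
  have hxy : G.Adj x y := G.mem_edgeSet.mp he
  have hab : G.Adj a b := G.mem_edgeSet.mp hf
  obtain ⟨p⟩ := hconn.preconnected x a
  exact reach_main hwheel p hxy hab



/-- For a connected SRG with `λ = 2` in which the neighbourhood of each vertex induces a
single cycle (each closed neighbourhood is a wheel), the anti-Gallai graph is connected
and edge-regular with parameters `(nk/2, 4, 1)`. -/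
theorem antiGallai_of_lambda_two {V : Type*} [Fintype V] (G : SimpleGraph V)
    [DecidableRel G.Adj] {n k m : ℕ} (hG : G.IsSRGWith n k 2 m) (hconn : G.Connected)
    (hnc : G ≠ ⊤) (hne : G ≠ ⊥)
    (hwheel : ∀ v : V, Nonempty (G.induce (G.neighborSet v) ≃g cycleGraph k)) :
    (antiGallai G).Connected ∧ IsEdgeRegularN (antiGallai G) (n * k / 2) 4 1 := by
  constructor
  · rw [connected_iff]
    exact ⟨antiGallai_preconnected hwheel hconn, ((edgeSet_nonempty (G:=G)).mpr hne).to_subtype⟩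
  · refine ⟨?_, fun e => deg_four hG e, ?_⟩
    · have hsum : ∑ v : V, G.degree v = 2 * G.edgeFinset.card :=
        G.sum_degrees_eq_twice_card_edges
      have hsum2 : ∑ v : V, G.degree v = n * k := by
        calc ∑ v : V, G.degree v = ∑ _v : V, k :=
              Finset.sum_congr rfl fun v _ => hG.regular v
          _ = Fintype.card V * k := by rw [Finset.sum_const, smul_eq_mul, Finset.card_univ]
          _ = n * k := by rw [hG.card]
      have hE : G.edgeFinset.card = Fintype.card G.edgeSet := G.edgeFinset_card
      rw [Nat.card_eq_fintype_card]
      omega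
    · intro x y hxy
      obtain ⟨hne', p, q, r, h1, h2, hqr⟩ := hxy
      have hx : x = ⟨s(p,q), h1 ▸ x.prop⟩ := Subtype.ext h1
      have hy : y = ⟨s(p,r), h2 ▸ y.prop⟩ := Subtype.ext h2
      have hpq : G.Adj p q := G.mem_edgeSet.mp (h1 ▸ x.prop)
      have hpr : G.Adj p r := G.mem_edgeSet.mp (h2 ▸ y.prop)
      rw [hx, hy, inter_eq hG hwheel hconn hnc hpq hpr hqr (h1 ▸ x.prop) (h2 ▸ y.prop),
        Set.ncard_singleton]

end GallaiSRG
end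

section
/- If G = H ∨ K₁ is the join of a triangle-free graph H with a single vertex, then the anti-Gallai graph Δ(G) is isomorphic to the semi-total point graph R(H). -/
open scoped Classical

namespace GallaiSRG

open SimpleGraph

variable {V : Type*}

section Aux

variable {H : SimpleGraph V}

private lemma jadj_ss {w w' : V} :
    (joinOne H).Adj (some w) (some w') ↔ H.Adj w w' := by
  constructor
  · rintro ⟨hne, h | h⟩ <;>
    · rcases h with h | ⟨a, b, ha, hb, hab⟩
      · simp at h
      · simp only [Option.some.injEq] at ha hb
        subst ha; subst hb
        first | exact hab | exact hab.symm
  · intro h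
    exact ⟨by simpa using h.ne, Or.inl (Or.inr ⟨w, w', rfl, rfl, h⟩)⟩

private lemma jadj_ns (v : V) : (joinOne H).Adj none (some v) :=
  ⟨by simp, Or.inl (Or.inl rfl)⟩

private lemma no_tri (hH : H.CliqueFree 3) {a b c : V}
    (h1 : H.Adj a b) (h2 : H.Adj a c) (h3 : H.Adj b c) : False :=
  hH {a, b, c} (SimpleGraph.is3Clique_iff.mpr ⟨a, b, c, h1, h2, h3, rfl⟩)

private lemma spans_pp {v v' : V} :
    SpansTriangle (joinOne H) s(none, some v) s(none, some v') ↔ H.Adj v v' := by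
  constructor
  · rintro ⟨u, x, y, he, hf, hxy⟩
    rw [Sym2.eq_iff] at he hf
    rcases he with ⟨hu, hx⟩ | ⟨hu, hx⟩ <;> rcases hf with ⟨hu', hy⟩ | ⟨hu', hy⟩ <;>
      subst_vars <;> simp_all [jadj_ss]
  · intro h
    exact ⟨none, some v, some v', rfl, rfl, jadj_ss.mpr h⟩

private lemma spans_pm {v w w' : V} :
    SpansTriangle (joinOne H) s(none, some v) s(some w, some w') ↔ v = w ∨ v = w' := by
  constructor
  · rintro ⟨u, x, y, he, hf, hxy⟩
    rw [Sym2.eq_iff] at he hf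
    rcases he with ⟨hu, hx⟩ | ⟨hu, hx⟩ <;> rcases hf with ⟨hu', hy⟩ | ⟨hu', hy⟩ <;>
      subst_vars <;> simp_all
  · rintro (rfl | rfl)
    · exact ⟨some v, none, some w', by rw [Sym2.eq_swap], rfl, jadj_ns w'⟩
    · exact ⟨some v, none, some w, by rw [Sym2.eq_swap], by rw [Sym2.eq_swap], jadj_ns w⟩

private lemma not_spans_mm (hH : H.CliqueFree 3) {w w' x x' : V}
    (h1 : H.Adj w w') (h2 : H.Adj x x') :
    ¬ SpansTriangle (joinOne H) s(some w, some w') s(some x, some x') := by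
  rintro ⟨u, p, q, he, hf, hpq⟩
  rw [Sym2.eq_iff] at he hf
  have h1' : ∃ t s : V, u = some t ∧ p = some s ∧ H.Adj t s := by
    rcases he with ⟨hu, hp⟩ | ⟨hu, hp⟩
    · exact ⟨w, w', hu.symm, hp.symm, h1⟩
    · exact ⟨w', w, hp.symm, hu.symm, h1.symm⟩
  have h2' : ∃ t r : V, u = some t ∧ q = some r ∧ H.Adj t r := by
    rcases hf with ⟨hu, hq⟩ | ⟨hu, hq⟩
    · exact ⟨x, x', hu.symm, hq.symm, h2⟩
    · exact ⟨x', x, hq.symm, hu.symm, h2.symm⟩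
  obtain ⟨t, sv, rfl, rfl, hts⟩ := h1'
  obtain ⟨t2, rv, ht2, rfl, htr⟩ := h2'
  simp only [Option.some.injEq] at ht2
  subst ht2
  exact no_tri hH hts htr (jadj_ss.mp hpq)

private lemma st_ll {v v' : V} :
    (semiTotal H).Adj (Sum.inl v) (Sum.inl v') ↔ H.Adj v v' := by
  constructor
  · rintro ⟨hne, (⟨w, w', hw, hw', hadj⟩ | ⟨w, e, hw, he, hm⟩) |
      (⟨w, w', hw, hw', hadj⟩ | ⟨w, e, hw, he, hm⟩)⟩
    · simp only [Sum.inl.injEq] at hw hw'; subst hw; subst hw'; exact hadj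
    · exact absurd he (by simp)
    · simp only [Sum.inl.injEq] at hw hw'; subst hw; subst hw'; exact hadj.symm
    · exact absurd he (by simp)
  · exact fun h => ⟨by simp [h.ne], Or.inl (Or.inl ⟨v, v', rfl, rfl, h⟩)⟩

private lemma st_lr {v : V} {e : H.edgeSet} :
    (semiTotal H).Adj (Sum.inl v) (Sum.inr e) ↔ v ∈ (e : Sym2 V) := by
  constructor
  · rintro ⟨hne, (⟨w, w', hw, hw', hadj⟩ | ⟨w, f, hw, hf, hm⟩) |
      (⟨w, w', hw, hw', hadj⟩ | ⟨w, f, hw, hf, hm⟩)⟩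
    · exact absurd hw' (by simp)
    · simp only [Sum.inl.injEq, Sum.inr.injEq] at hw hf; subst hw; subst hf; exact hm
    · exact absurd hw (by simp)
    · exact absurd hw (by simp)
  · exact fun h => ⟨by simp, Or.inl (Or.inr ⟨v, e, rfl, rfl, h⟩)⟩

private lemma st_rr {e f : H.edgeSet} :
    ¬ (semiTotal H).Adj (Sum.inr e) (Sum.inr f) := by
  rintro ⟨hne, (⟨w, w', hw, hw', hadj⟩ | ⟨w, g, hw, hg, hm⟩) |
    (⟨w, w', hw, hw', hadj⟩ | ⟨w, g, hw, hg, hm⟩)⟩ <;>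
    first
    | exact absurd hw (by simp)
    | exact absurd hw' (by simp)
    | exact absurd hg (by simp)

private lemma none_not_mem_map (e : H.edgeSet) :
    (none : Option V) ∉ Sym2.map some (e : Sym2 V) := by
  obtain ⟨e, -⟩ := e
  induction e using Sym2.ind with
  | _ a b => simp [Sym2.map_pair_eq]

private def phi (H : SimpleGraph V) : V ⊕ H.edgeSet → (joinOne H).edgeSet
  | Sum.inl v => ⟨s(none, some v), (joinOne H).mem_edgeSet.mpr (jadj_ns v)⟩
  | Sum.inr e => ⟨Sym2.map some (e : Sym2 V), by
      obtain ⟨e, he⟩ := e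
      induction e using Sym2.ind with
      | _ w w' =>
        rw [Sym2.map_pair_eq]
        exact (joinOne H).mem_edgeSet.mpr (jadj_ss.mpr (H.mem_edgeSet.mp he))⟩

private lemma phi_bij : Function.Bijective (phi H) := by
  constructor
  · rintro (v | e) (v' | f) h <;>
      simp only [phi, Subtype.mk.injEq] at h
    · rw [Sym2.eq_iff] at h
      simp only [Option.some.injEq] at h
      rcases h with ⟨-, rfl⟩ | ⟨h, -⟩
      · rfl
      · simp at h
    · exact absurd (h ▸ (by simp : (none : Option V) ∈ s(none, some v)))
        (none_not_mem_map f)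
    · exact absurd (h.symm ▸ (by simp : (none : Option V) ∈ s(none, some v')))
        (none_not_mem_map e)
    · exact congrArg Sum.inr (Subtype.ext
        (Sym2.map.injective (Option.some_injective V) h))
  · rintro ⟨e, he⟩
    induction e using Sym2.ind with
    | _ a b =>
      have hadj : (joinOne H).Adj a b := (joinOne H).mem_edgeSet.mp he
      match a, b with
      | none, none => exact absurd hadj ((joinOne H).irrefl)
      | none, some v => exact ⟨Sum.inl v, rfl⟩
      | some v, none => exact ⟨Sum.inl v, Subtype.ext (Sym2.eq_swap)⟩
      | some w, some w' =>
        refine ⟨Sum.inr ⟨s(w, w'), H.mem_edgeSet.mpr (jadj_ss.mp hadj)⟩, ?_⟩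
        exact Subtype.ext (Sym2.map_pair_eq some w w')

private lemma ag_adj {W : Type*} {G : SimpleGraph W} {e f : G.edgeSet} :
    (antiGallai G).Adj e f ↔ (e : Sym2 W) ≠ (f : Sym2 W) ∧ SpansTriangle G e f :=
  Iff.rfl

private lemma phi_inl (v : V) :
    ((phi H (Sum.inl v) : (joinOne H).edgeSet) : Sym2 (Option V)) = s(none, some v) := rfl

private lemma phi_inr (e : H.edgeSet) :
    ((phi H (Sum.inr e) : (joinOne H).edgeSet) : Sym2 (Option V)) =
      Sym2.map some (e : Sym2 V) := rfl

private lemma key_ll (v v' : V) :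
    (antiGallai (joinOne H)).Adj (phi H (Sum.inl v)) (phi H (Sum.inl v')) ↔
      (semiTotal H).Adj (Sum.inl v) (Sum.inl v') := by
  rw [ag_adj, phi_inl, phi_inl, spans_pp, st_ll]
  constructor
  · exact fun h => h.2
  · intro h
    exact ⟨by simp [Sym2.eq_iff, h.ne], h⟩

private lemma key_lr (v : V) (e : H.edgeSet) :
    (antiGallai (joinOne H)).Adj (phi H (Sum.inl v)) (phi H (Sum.inr e)) ↔
      (semiTotal H).Adj (Sum.inl v) (Sum.inr e) := by
  rw [ag_adj, phi_inl, phi_inr, st_lr]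
  obtain ⟨f, hf⟩ := e
  induction f using Sym2.ind with
  | _ w w' =>
    rw [Sym2.map_pair_eq, spans_pm]
    constructor
    · rintro ⟨-, h⟩
      simpa [Sym2.mem_iff] using h
    · intro h
      exact ⟨by simp [Sym2.eq_iff], by simpa [Sym2.mem_iff] using h⟩

private lemma key_rr (hH : H.CliqueFree 3) (e f : H.edgeSet) :
    ¬ (antiGallai (joinOne H)).Adj (phi H (Sum.inr e)) (phi H (Sum.inr f)) := by
  rw [ag_adj, phi_inr, phi_inr]
  obtain ⟨e, he⟩ := e
  obtain ⟨f, hf⟩ := f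
  induction e using Sym2.ind with
  | _ w w' =>
    induction f using Sym2.ind with
    | _ x x' =>
      rw [Sym2.map_pair_eq, Sym2.map_pair_eq]
      rintro ⟨-, hsp⟩
      exact not_spans_mm hH (H.mem_edgeSet.mp he) (H.mem_edgeSet.mp hf) hsp

private lemma key (hH : H.CliqueFree 3) (a b : V ⊕ H.edgeSet) :
    (antiGallai (joinOne H)).Adj (phi H a) (phi H b) ↔ (semiTotal H).Adj a b := by
  obtain (v | e) := a <;> obtain (v' | f) := b
  · exact key_ll v v'
  · exact key_lr v f
  · rw [(antiGallai (joinOne H)).adj_comm, (semiTotal H).adj_comm]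
    exact key_lr v' e
  · exact iff_of_false (key_rr hH e f) st_rr

end Aux

/-- If `G = H ∨ K₁` with `H` triangle-free, then the anti-Gallai graph of `G` is the
semi-total point graph of `H`. -/
theorem antiGallai_joinOne {V : Type*} (H : SimpleGraph V) (hH : H.CliqueFree 3) :
    Nonempty (antiGallai (joinOne H) ≃g semiTotal H) := by
  exact ⟨(SimpleGraph.Iso.symm ⟨Equiv.ofBijective (phi H) phi_bij, fun {a b} => key hH a b⟩)⟩

end GallaiSRG
end

section
/- Let G be a connected strongly regular graph with parameters (n, k, 2, μ) in which the neighbourhood of each vertex induces a single cycle. Then every eigenvalue of the adjacency matrix of Δ(G) lies in [−4, 4], and Δ(G) contains the semi-total point graph R(C_k) as an induced subgraph. -/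
open scoped Classical

namespace GallaiSRG

open SimpleGraph

variable {V : Type*}

lemma fin_two_ne_one (n:ℕ) : (2 : Fin (n+4)) ≠ 1 := by
  intro h
  have h2 : (2:ℕ) % (n+4) = 1 % (n+4) := congrArg Fin.val h
  rw [Nat.mod_eq_of_lt (by omega), Nat.mod_eq_of_lt (by omega)] at h2
  omega

lemma fin_three_ne_zero (n:ℕ) : (3 : Fin (n+4)) ≠ 0 := by
  intro h
  have h2 : (3:ℕ) % (n+4) = 0 := congrArg Fin.val h
  rw [Nat.mod_eq_of_lt (by omega)] at h2
  omega

open Fin.CommRing in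
lemma cycle_tf {k : ℕ} (hk : k ≠ 3) {a b c : Fin k} (h1 : (cycleGraph k).Adj a b)
    (h2 : (cycleGraph k).Adj b c) (h3 : (cycleGraph k).Adj a c) : False := by
  match k, hk with
  | 0, _ => exact h1.elim
  | 1, _ => exact cycleGraph_one_adj h1
  | 2, _ => fin_cases a <;> fin_cases b <;> fin_cases c <;> simp_all [cycleGraph_adj]
  | (n+4), _ =>
    rw [cycleGraph_adj] at h1 h2 h3
    rcases h1 with ha | ha <;> rcases h2 with hb | hb <;> rcases h3 with hc | hc
    · exact fin_two_ne_one n (by linear_combination hc - ha - hb)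
    · exact fin_three_ne_zero n (by linear_combination -ha - hb - hc)
    · exact one_ne_zero (by linear_combination ha - hb - hc : (1:Fin (n+4)) = 0)
    · exact one_ne_zero (by linear_combination -ha + hb - hc : (1:Fin (n+4)) = 0)
    · exact one_ne_zero (by linear_combination -ha + hb - hc : (1:Fin (n+4)) = 0)
    · exact one_ne_zero (by linear_combination ha - hb - hc : (1:Fin (n+4)) = 0)
    · exact fin_three_ne_zero n (by linear_combination -ha - hb - hc)
    · exact fin_two_ne_one n (by linear_combination hc - ha - hb)

lemma antiGallai_adj_decomp {G : SimpleGraph V} {e f : G.edgeSet} {x y : V}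
    (hxy : (e : Sym2 V) = s(x, y)) (h : (antiGallai G).Adj e f) :
    ∃ d, G.Adj x d ∧ G.Adj y d ∧ ((f : Sym2 V) = s(x, d) ∨ (f : Sym2 V) = s(y, d)) := by
  obtain ⟨hne, u, c, d, he, hf, hcd⟩ := h
  have hfE : G.Adj u d := by
    have := f.2
    rw [hf, mem_edgeSet] at this
    exact this
  rw [hxy] at he
  rw [Sym2.eq_iff] at he
  rcases he with ⟨rfl, rfl⟩ | ⟨rfl, rfl⟩
  · exact ⟨d, hfE, hcd, Or.inl hf⟩
  · exact ⟨d, hcd, hfE, Or.inr hf⟩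

lemma antiGallai_degree_le [Fintype V] [DecidableEq V] (G : SimpleGraph V)
    [DecidableRel G.Adj] {n k m : ℕ} (hG : G.IsSRGWith n k 2 m) (e : G.edgeSet) :
    (antiGallai G).degree e ≤ 4 := by
  obtain ⟨z, hz⟩ := e
  induction z using Sym2.ind with
  | _ x y =>
  have hadj : G.Adj x y := G.mem_edgeSet.mp hz
  have hcard : (G.commonNeighbors x y).toFinset.card = 2 := by
    rw [Set.toFinset_card]; exact hG.of_adj x y hadj
  obtain ⟨w1, w2, hw, hset⟩ := Finset.card_eq_two.mp hcard
  classical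
  set T : Finset (Sym2 V) := {s(x,w1), s(x,w2), s(y,w1), s(y,w2)} with hT
  have hsub : (antiGallai G).neighborFinset ⟨s(x,y), hz⟩ ⊆
      Finset.univ.filter (fun f : G.edgeSet => (f : Sym2 V) ∈ T) := by
    intro f hf
    rw [mem_neighborFinset] at hf
    obtain ⟨d, hxd, hyd, hfd⟩ := antiGallai_adj_decomp rfl hf
    have hdmem : d ∈ (G.commonNeighbors x y).toFinset := by
      rw [Set.mem_toFinset]
      exact ⟨hxd, hyd⟩
    rw [hset, Finset.mem_insert, Finset.mem_singleton] at hdmem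
    simp only [Finset.mem_filter, Finset.mem_univ, true_and, hT, Finset.mem_insert,
      Finset.mem_singleton]
    rcases hdmem with rfl | rfl <;> rcases hfd with h | h <;> simp [h]
  have h1 : (antiGallai G).degree ⟨s(x,y), hz⟩ ≤
      (Finset.univ.filter (fun f : G.edgeSet => (f : Sym2 V) ∈ T)).card :=
    Finset.card_le_card hsub
  have h2 : (Finset.univ.filter (fun f : G.edgeSet => (f : Sym2 V) ∈ T)).card ≤ T.card := by
    refine Finset.card_le_card_of_injOn (fun f => (f : Sym2 V))
      (fun f hf => (Finset.mem_filter.mp hf).2) (fun a _ b _ hab => Subtype.ext hab)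
  have h3 : T.card ≤ 4 := by
    apply le_trans (Finset.card_insert_le _ _)
    have := Finset.card_insert_le s(x,w2) ({s(y,w1), s(y,w2)} : Finset (Sym2 V))
    have := Finset.card_insert_le s(y,w1) ({s(y,w2)} : Finset (Sym2 V))
    simp only [Finset.card_singleton] at *
    omega
  omega

lemma embed_aux (G : SimpleGraph V) {k : ℕ} (v : V) (ψ : Fin k → V)
    (hinj : Function.Injective ψ) (hmem : ∀ i, G.Adj v (ψ i))
    (hiff : ∀ i j, (cycleGraph k).Adj i j ↔ G.Adj (ψ i) (ψ j))
    (htf : ∀ {a b c : Fin k}, (cycleGraph k).Adj a b → (cycleGraph k).Adj b c →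
      (cycleGraph k).Adj a c → False) :
    Nonempty (semiTotal (cycleGraph k) ↪g antiGallai G) := by
  have hvne : ∀ i, v ≠ ψ i := fun i => (hmem i).ne
  have hmapmem : ∀ z : Sym2 (Fin k), z ∈ (cycleGraph k).edgeSet → Sym2.map ψ z ∈ G.edgeSet := by
    intro z hz
    induction z using Sym2.ind with
    | _ i j =>
      rw [Sym2.map_pair_eq, mem_edgeSet]
      exact (hiff i j).mp ((cycleGraph k).mem_edgeSet.mp hz)
  -- the vertex map
  set F : Fin k ⊕ (cycleGraph k).edgeSet → G.edgeSet :=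
    Sum.elim (fun i => ⟨s(v, ψ i), G.mem_edgeSet.mpr (hmem i)⟩)
      (fun z => ⟨Sym2.map ψ (z : Sym2 (Fin k)), hmapmem _ z.2⟩) with hF
  -- spans lemmas
  have spans_vv : ∀ i j : Fin k, SpansTriangle G s(v, ψ i) s(v, ψ j) ↔ G.Adj (ψ i) (ψ j) := by
    intro i j
    constructor
    · rintro ⟨u, c, d, h1, h2, hcd⟩
      rw [Sym2.eq_iff] at h1 h2
      rcases h1 with ⟨rfl, rfl⟩ | ⟨rfl, rfl⟩
      · rcases h2 with ⟨-, rfl⟩ | ⟨rfl, hj⟩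
        · exact hcd
        · exact absurd hj.symm (hvne j)
      · rcases h2 with ⟨hv, rfl⟩ | ⟨rfl, hj⟩
        · exact absurd hv (hvne i)
        · exact absurd hcd (G.loopless.irrefl v)
    · intro h
      exact ⟨v, ψ i, ψ j, rfl, rfl, h⟩
  have spans_ve : ∀ (i a b : Fin k), SpansTriangle G s(v, ψ i) s(ψ a, ψ b) ↔ (i = a ∨ i = b) := by
    intro i a b
    constructor
    · rintro ⟨u, c, d, h1, h2, hcd⟩
      rw [Sym2.eq_iff] at h1 h2
      rcases h1 with ⟨rfl, rfl⟩ | ⟨rfl, rfl⟩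
      · rcases h2 with ⟨ha, -⟩ | ⟨-, hb⟩
        · exact absurd ha.symm (hvne a)
        · exact absurd hb.symm (hvne b)
      · rcases h2 with ⟨ha, -⟩ | ⟨ha, hb⟩
        · exact Or.inl (hinj ha.symm)
        · exact Or.inr (hinj hb.symm)
    · rintro (rfl | rfl)
      · exact ⟨ψ i, v, ψ b, Sym2.eq_swap, rfl, hmem b⟩
      · exact ⟨ψ i, v, ψ a, Sym2.eq_swap, Sym2.eq_swap, hmem a⟩
  have spans_ee : ∀ (a b p q : Fin k), (cycleGraph k).Adj a b → (cycleGraph k).Adj p q →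
      SpansTriangle G s(ψ a, ψ b) s(ψ p, ψ q) → False := by
    rintro a b p q hab hpq ⟨u, c, d, h1, h2, hcd⟩
    rw [Sym2.eq_iff] at h1 h2
    rcases h1 with ⟨rfl, rfl⟩ | ⟨rfl, rfl⟩
    · rcases h2 with ⟨hp, rfl⟩ | ⟨rfl, hq⟩
      · have hpa : p = a := hinj hp
        subst hpa
        exact htf hab ((hiff b q).mpr hcd) hpq
      · have hqa : q = a := hinj hq
        subst hqa
        exact htf hab ((hiff b p).mpr hcd) hpq.symm
    · rcases h2 with ⟨hp, rfl⟩ | ⟨rfl, hq⟩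
      · have hpb : p = b := hinj hp
        subst hpb
        exact htf hab.symm ((hiff a q).mpr hcd) hpq
      · have hqb : q = b := hinj hq
        subst hqb
        exact htf hab.symm ((hiff a p).mpr hcd) hpq.symm
  -- representation of cycle edges
  have hrep : ∀ z : (cycleGraph k).edgeSet, ∃ a b : Fin k,
      (z : Sym2 (Fin k)) = s(a, b) ∧ (cycleGraph k).Adj a b := by
    rintro ⟨z, hz⟩
    induction z using Sym2.ind with
    | _ a b => exact ⟨a, b, rfl, (cycleGraph k).mem_edgeSet.mp hz⟩
  -- injectivity
  have hFinj : Function.Injective F := by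
    rintro (i | z) (j | w) h
    · have h' : s(v, ψ i) = s(v, ψ j) := congrArg Subtype.val h
      rw [Sym2.eq_iff] at h'
      rcases h' with ⟨-, h'⟩ | ⟨hv, -⟩
      · rw [hinj h']
      · exact absurd hv (hvne j)
    · obtain ⟨a, b, hab, -⟩ := hrep w
      have h' : s(v, ψ i) = Sym2.map ψ (w : Sym2 (Fin k)) := congrArg Subtype.val h
      rw [hab, Sym2.map_pair_eq, Sym2.eq_iff] at h'
      rcases h' with ⟨hv, -⟩ | ⟨hv, -⟩
      · exact absurd hv (hvne a)
      · exact absurd hv (hvne b)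
    · obtain ⟨a, b, hab, -⟩ := hrep z
      have h' : Sym2.map ψ (z : Sym2 (Fin k)) = s(v, ψ j) := congrArg Subtype.val h
      rw [hab, Sym2.map_pair_eq, Sym2.eq_iff] at h'
      rcases h' with ⟨hv, -⟩ | ⟨-, hv⟩
      · exact absurd hv.symm (hvne a)
      · exact absurd hv.symm (hvne b)
    · have h' : Sym2.map ψ (z : Sym2 (Fin k)) = Sym2.map ψ (w : Sym2 (Fin k)) :=
        congrArg Subtype.val h
      exact congrArg Sum.inr (Subtype.ext (Sym2.map.injective hinj h'))
  refine ⟨⟨⟨F, hFinj⟩, ?_⟩⟩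
  rintro (i | z) (j | w)
  · -- spoke-spoke
    show (s(v, ψ i) ≠ s(v, ψ j) ∧ SpansTriangle G s(v, ψ i) s(v, ψ j)) ↔ _
    rw [spans_vv]
    constructor
    · rintro ⟨hne, hadj⟩
      have hij : i ≠ j := by
        intro h; exact hne (by rw [h])
      refine (SimpleGraph.fromRel_adj _ _ _).mpr ⟨by simpa using hij, Or.inl ?_⟩
      exact Or.inl ⟨i, j, rfl, rfl, (hiff i j).mpr hadj⟩
    · intro h
      obtain ⟨hne, h⟩ := (SimpleGraph.fromRel_adj _ _ _).mp h
      have hadj : (cycleGraph k).Adj i j := by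
        rcases h with (⟨a, b, ha, hb, hadj⟩ | ⟨a, e, ha, hb, -⟩) | (⟨a, b, ha, hb, hadj⟩ | ⟨a, e, ha, hb, -⟩)
        · cases ha; cases hb; exact hadj
        · exact absurd hb (by simp)
        · cases ha; cases hb; exact hadj.symm
        · exact absurd hb (by simp)
      refine ⟨?_, (hiff i j).mp hadj⟩
      intro hc
      rw [Sym2.eq_iff] at hc
      rcases hc with ⟨-, hc⟩ | ⟨hc, -⟩
      · exact hadj.ne (hinj hc)
      · exact hvne j hc
  · -- spoke - rim
    obtain ⟨a, b, hab, hadj⟩ := hrep w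
    show (s(v, ψ i) ≠ Sym2.map ψ (w : Sym2 (Fin k)) ∧
        SpansTriangle G s(v, ψ i) (Sym2.map ψ (w : Sym2 (Fin k)))) ↔ _
    rw [hab, Sym2.map_pair_eq, spans_ve i a b]
    constructor
    · rintro ⟨-, h⟩
      refine (SimpleGraph.fromRel_adj _ _ _).mpr ⟨by simp, Or.inl (Or.inr ?_)⟩
      exact ⟨i, w, rfl, rfl, by rw [hab, Sym2.mem_iff]; exact h⟩
    · intro h
      obtain ⟨-, h⟩ := (SimpleGraph.fromRel_adj _ _ _).mp h
      have hmem' : i = a ∨ i = b := by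
        rcases h with (⟨x, y, hx, hy, -⟩ | ⟨x, e, hx, hy, hm⟩) | (⟨x, y, hx, -, -⟩ | ⟨x, e, -, hy, -⟩)
        · exact absurd hy (by simp)
        · cases hx; cases hy; rw [hab, Sym2.mem_iff] at hm; exact hm
        · exact absurd hx (by simp)
        · exact absurd hy (by simp)
      refine ⟨?_, hmem'⟩
      intro hc
      rw [Sym2.eq_iff] at hc
      rcases hc with ⟨hc, -⟩ | ⟨hc, -⟩
      · exact hvne a hc
      · exact hvne b hc
  · -- rim - spoke
    obtain ⟨a, b, hab, hadj⟩ := hrep z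
    show (Sym2.map ψ (z : Sym2 (Fin k)) ≠ s(v, ψ j) ∧
        SpansTriangle G (Sym2.map ψ (z : Sym2 (Fin k))) s(v, ψ j)) ↔ _
    rw [hab, Sym2.map_pair_eq]
    constructor
    · rintro ⟨hne, h⟩
      have h' : SpansTriangle G s(v, ψ j) s(ψ a, ψ b) := by
        obtain ⟨u, c, d, h1, h2, hcd⟩ := h
        exact ⟨u, d, c, h2, h1, hcd.symm⟩
      rw [spans_ve j a b] at h'
      refine (SimpleGraph.fromRel_adj _ _ _).mpr ⟨by simp, Or.inr (Or.inr ?_)⟩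
      exact ⟨j, z, rfl, rfl, by rw [hab, Sym2.mem_iff]; exact h'⟩
    · intro h
      obtain ⟨-, h⟩ := (SimpleGraph.fromRel_adj _ _ _).mp h
      have hmem' : j = a ∨ j = b := by
        rcases h with (⟨x, y, hx, -, -⟩ | ⟨x, e, hx, -, -⟩) | (⟨x, y, -, hy, -⟩ | ⟨x, e, hx, hy, hm⟩)
        · exact absurd hx (by simp)
        · exact absurd hx (by simp)
        · exact absurd hy (by simp)
        · cases hx; cases hy; rw [hab, Sym2.mem_iff] at hm; exact hm
      constructor
      · intro hc
        rw [Sym2.eq_iff] at hc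
        rcases hc with ⟨hc, -⟩ | ⟨-, hc⟩
        · exact hvne a hc.symm
        · exact hvne b hc.symm
      · have h' : SpansTriangle G s(v, ψ j) s(ψ a, ψ b) := (spans_ve j a b).mpr hmem'
        obtain ⟨u, c, d, h1, h2, hcd⟩ := h'
        exact ⟨u, d, c, h2, h1, hcd.symm⟩
  · -- rim - rim
    obtain ⟨a, b, hab, hadjab⟩ := hrep z
    obtain ⟨p, q, hpq, hadjpq⟩ := hrep w
    show (Sym2.map ψ (z : Sym2 (Fin k)) ≠ Sym2.map ψ (w : Sym2 (Fin k)) ∧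
        SpansTriangle G (Sym2.map ψ (z : Sym2 (Fin k))) (Sym2.map ψ (w : Sym2 (Fin k)))) ↔ _
    rw [hab, hpq, Sym2.map_pair_eq, Sym2.map_pair_eq]
    constructor
    · rintro ⟨-, h⟩
      exact absurd h (fun hh => spans_ee a b p q hadjab hadjpq hh)
    · intro h
      obtain ⟨-, h⟩ := (SimpleGraph.fromRel_adj _ _ _).mp h
      rcases h with (⟨x, y, hx, -, -⟩ | ⟨x, e, hx, -, -⟩) | (⟨x, y, hx, -, -⟩ | ⟨x, e, hx, -, -⟩) <;>
        exact absurd hx (by simp)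

/-- For a connected SRG with `λ = 2` whose vertex neighbourhoods induce single cycles,
every adjacency eigenvalue of the anti-Gallai graph lies in `[-4, 4]`, and the
semi-total point graph `R(C_k)` is an induced subgraph of the anti-Gallai graph. -/
theorem antiGallai_spectrum_interlace {V : Type*} [Fintype V] [DecidableEq V]
    (G : SimpleGraph V) [DecidableRel G.Adj] {n k m : ℕ} (hG : G.IsSRGWith n k 2 m)
    (hconn : G.Connected) (hnc : G ≠ ⊤) (hne : G ≠ ⊥)
    (hwheel : ∀ v : V, Nonempty (G.induce (G.neighborSet v) ≃g cycleGraph k)) :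
    (∀ x : ℝ, Module.End.HasEigenvalue
        (Matrix.toLin' ((antiGallai G).adjMatrix ℝ)) x → |x| ≤ 4) ∧
      Nonempty (semiTotal (cycleGraph k) ↪g antiGallai G) := by
  classical
  constructor
  · -- eigenvalue bound via Gershgorin
    intro x hx
    obtain ⟨e, he⟩ := eigenvalue_mem_ball hx
    rw [Metric.mem_closedBall] at he
    have h0 : (antiGallai G).adjMatrix ℝ e e = 0 := by simp
    rw [h0, dist_zero_right, Real.norm_eq_abs] at he
    refine he.trans ?_
    have hnn : ∀ j, (0:ℝ) ≤ (antiGallai G).adjMatrix ℝ e j := by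
      intro j
      simp only [SimpleGraph.adjMatrix_apply]
      split_ifs <;> norm_num
    calc ∑ j ∈ Finset.univ.erase e, ‖(antiGallai G).adjMatrix ℝ e j‖
        = ∑ j ∈ Finset.univ.erase e, (antiGallai G).adjMatrix ℝ e j :=
          Finset.sum_congr rfl fun j _ => by rw [Real.norm_eq_abs, abs_of_nonneg (hnn j)]
      _ ≤ ∑ j, (antiGallai G).adjMatrix ℝ e j :=
          Finset.sum_le_sum_of_subset_of_nonneg (Finset.erase_subset _ _) fun j _ _ => hnn j
      _ = ((antiGallai G).degree e : ℝ) := by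
          simp only [SimpleGraph.adjMatrix_apply]
          rw [Finset.sum_boole, SimpleGraph.degree, SimpleGraph.neighborFinset_eq_filter]
      _ ≤ 4 := by exact_mod_cast antiGallai_degree_le G hG e
  · -- the induced embedding of `R(C_k)`
    have hex : ∃ a b : V, G.Adj a b := by
      obtain ⟨z, hz⟩ : G.edgeSet.Nonempty := SimpleGraph.edgeSet_nonempty.mpr hne
      induction z using Sym2.ind with
      | _ a b => exact ⟨a, b, G.mem_edgeSet.mp hz⟩
    obtain ⟨v, w0, hvw⟩ := hex
    have φ := (hwheel v).some
    set ψ : Fin k → V := fun i => ((φ.symm i : G.neighborSet v) : V) with hψ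
    have hmem : ∀ i, G.Adj v (ψ i) := fun i => (φ.symm i).2
    have hinj : Function.Injective ψ := fun i j h => φ.symm.injective (Subtype.ext h)
    have hiff : ∀ i j, (cycleGraph k).Adj i j ↔ G.Adj (ψ i) (ψ j) := by
      intro i j
      rw [← φ.symm.map_adj_iff]
      exact Iff.rfl
    have hnbr3 : k = 3 → ∀ (w a b : V), G.Adj w a → G.Adj w b → a ≠ b → G.Adj a b := by
      rintro rfl w a b ha hb hab
      have φw := (hwheel w).some
      have hadj3 : ∀ x y : Fin 3, x ≠ y → (cycleGraph 3).Adj x y := by decide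
      have h3 : (cycleGraph 3).Adj (φw ⟨a, ha⟩) (φw ⟨b, hb⟩) := by
        apply hadj3
        intro hc
        exact hab (Subtype.mk_eq_mk.mp (φw.injective hc))
      exact φw.map_adj_iff.mp h3
    have hk3 : k ≠ 3 := by
      intro hk
      apply hnc
      have hstep : ∀ a, (a = v ∨ G.Adj v a) → ∀ b, G.Adj a b → (b = v ∨ G.Adj v b) := by
        intro a ha b hab
        rcases ha with rfl | ha
        · exact Or.inr hab
        · by_cases hbv : b = v
          · exact Or.inl hbv
          · exact Or.inr (hnbr3 hk a v b ha.symm hab fun h => hbv h.symm)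
      have hwalk : ∀ (a b : V), G.Walk a b → (a = v ∨ G.Adj v a) → (b = v ∨ G.Adj v b) := by
        intro a b p
        induction p with
        | nil => exact id
        | cons h p ih => intro ha; exact ih (hstep _ ha _ h)
      have hall : ∀ b, b = v ∨ G.Adj v b := fun b =>
        hwalk v b ((hconn.preconnected v b).some) (Or.inl rfl)
      ext a b
      rw [top_adj]
      constructor
      · exact fun h => h.ne
      · intro hab
        rcases hall a with rfl | ha
        · rcases hall b with rfl | hb
          · exact absurd rfl hab
          · exact hb
        · rcases hall b with rfl | hb
          · exact ha.symm
          · exact hnbr3 hk v a b ha hb hab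
    exact embed_aux G v ψ hinj hmem hiff fun h1 h2 h3 => cycle_tf hk3 h1 h2 h3

end GallaiSRG
end
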